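/- Every non-Abelian three-dimensional nilpotent complex Jordan algebra is isomorphic to exactly one of: φ₁ with φ₁(e₁,e₁)=e₂, φ₁(e₁,e₂)=e₃; φ₂ with φ₂(e₁,e₁)=e₂, φ₂(e₃,e₃)=e₂; or φ₃ with φ₃(e₁,e₁)=e₂ (all other basis products zero). -/

import Mathlib

/-- Bilinearity of a plain product. -/
def IsBilin (K : Type*) [Field K] {V : Type*} [AddCommGroup V] [Module K V]
    (φ : V → V → V) : Prop :=
  (∀ (a : K) (x y z : V), φ (a • x + y) z = a • φ x z + φ y z) ∧
  (∀ (a : K) (x y z : V), φ x (a • y + z) = a • φ x y + φ x z)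

/-- Commutativity (symmetry) of the product. -/
def IsComm {V : Type*} (φ : V → V → V) : Prop := ∀ x y, φ x y = φ y x

/-- The Jordan identity. -/
def JordanId {V : Type*} (φ : V → V → V) : Prop :=
  ∀ x y, φ (φ x x) (φ x y) = φ x (φ (φ x x) y)

/-- Lower central series: `lcs K φ 0 = C¹ = V`, and `lcs K φ m` is the term `C^{m+1}`. -/
def lcs (K : Type*) [Field K] {V : Type*} [AddCommGroup V] [Module K V]
    (φ : V → V → V) : ℕ → Submodule K V
  | 0 => ⊤
  | m + 1 => Submodule.span K {z | ∃ x ∈ lcs K φ m, ∃ y, z = φ x y}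

/-- Nilpotency: some term of the lower central series vanishes. -/
def IsNilp (K : Type*) [Field K] {V : Type*} [AddCommGroup V] [Module K V]
    (φ : V → V → V) : Prop := ∃ k, lcs K φ k = ⊥

/-- Isomorphism of products. -/
def IsIso (K : Type*) [Field K] {V W : Type*} [AddCommGroup V] [Module K V]
    [AddCommGroup W] [Module K W] (φ : V → V → V) (ψ : W → W → W) : Prop :=
  ∃ f : V ≃ₗ[K] W, ∀ x y, f (φ x y) = ψ (f x) (f y)

/-- φ₁(e₁,e₁)=e₂, φ₁(e₁,e₂)=e₃. -/
def ψ₁ (x y : Fin 3 → ℂ) : Fin 3 → ℂ := ![0, x 0 * y 0, x 0 * y 1 + x 1 * y 0]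
/-- φ₂(e₁,e₁)=e₂, φ₂(e₃,e₃)=e₂. -/
def ψ₂ (x y : Fin 3 → ℂ) : Fin 3 → ℂ := ![0, x 0 * y 0 + x 2 * y 2, 0]
/-- φ₃(e₁,e₁)=e₂. -/
def ψ₃ (x y : Fin 3 → ℂ) : Fin 3 → ℂ := ![0, x 0 * y 0, 0]

def model : Fin 3 → ((Fin 3 → ℂ) → (Fin 3 → ℂ) → (Fin 3 → ℂ)) := ![ψ₁, ψ₂, ψ₃]


section Helpers

variable {V : Type*} [AddCommGroup V] [Module ℂ V] {φ : V → V → V}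

theorem exists_Phi (hbil : IsBilin ℂ φ) :
    ∃ Φ : V →ₗ[ℂ] V →ₗ[ℂ] V, ∀ x y, Φ x y = φ x y := by
  obtain ⟨h1, h2⟩ := hbil
  have hz1 : ∀ z, φ 0 z = 0 := by
    intro z
    have h := h1 1 0 0 z
    simp only [one_smul, add_zero] at h
    exact add_eq_left.mp h.symm
  have hz2 : ∀ z, φ z 0 = 0 := by
    intro z
    have h := h2 1 z 0 0
    simp only [one_smul, add_zero] at h
    exact add_eq_left.mp h.symm
  refine ⟨LinearMap.mk₂ ℂ φ ?_ ?_ ?_ ?_, fun x y => rfl⟩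
  · intro x y z
    have := h1 1 x y z; simpa using this
  · intro c x z
    have := h1 c x 0 z; simpa [hz1] using this
  · intro x y z
    have := h2 1 x y z; simpa using this
  · intro c x z
    have := h2 c x z 0; simpa [hz2] using this

theorem lcs_succ_le (φ : V → V → V) : ∀ m, lcs ℂ φ (m + 1) ≤ lcs ℂ φ m
  | 0 => le_top
  | m + 1 => by
    apply Submodule.span_mono
    rintro z ⟨x, hx, y, rfl⟩
    exact ⟨x, lcs_succ_le φ m hx, y, rfl⟩

theorem lcs_le_of_le (φ : V → V → V) {k n : ℕ} (h : k ≤ n) : lcs ℂ φ n ≤ lcs ℂ φ k := by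
  induction n with
  | zero => simp_all
  | succ n ih =>
    rcases Nat.lt_or_ge k (n+1) with h' | h'
    · exact le_trans (lcs_succ_le φ n) (ih (Nat.lt_succ_iff.mp h'))
    · have : k = n + 1 := le_antisymm h h'
      subst this; exact le_rfl

theorem lcs_stab (φ : V → V → V) {m : ℕ} (h : lcs ℂ φ m = lcs ℂ φ (m + 1)) :
    ∀ k, lcs ℂ φ (m + k) = lcs ℂ φ m := by
  intro k
  induction k with
  | zero => rfl
  | succ k ih =>
    show lcs ℂ φ (m + k + 1) = lcs ℂ φ m
    have : lcs ℂ φ (m + k + 1) = lcs ℂ φ (m + 1) := by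
      show Submodule.span ℂ {z | ∃ x ∈ lcs ℂ φ (m + k), ∃ y, z = φ x y} = _
      rw [ih]; rfl
    rw [this, ← h]

theorem lcs_strict (φ : V → V → V) (hnilp : IsNilp ℂ φ) {m : ℕ}
    (h : lcs ℂ φ m ≠ ⊥) : lcs ℂ φ (m + 1) < lcs ℂ φ m := by
  rcases lt_or_eq_of_le (lcs_succ_le φ m) with h' | h'
  · exact h'
  · exfalso
    obtain ⟨k, hk⟩ := hnilp
    rcases Nat.le_total k m with hkm | hkm
    · exact h (le_bot_iff.mp (hk ▸ lcs_le_of_le φ hkm))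
    · obtain ⟨j, rfl⟩ := Nat.exists_eq_add_of_le hkm
      exact h (lcs_stab φ h'.symm j ▸ hk)

theorem prod_mem_lcs1 (φ : V → V → V) (a b : V) : φ a b ∈ lcs ℂ φ 1 :=
  Submodule.subset_span ⟨a, trivial, b, rfl⟩

theorem mem_lcs_succ (φ : V → V → V) {m : ℕ} {d : V} (hd : d ∈ lcs ℂ φ m) (v : V) :
    φ d v ∈ lcs ℂ φ (m + 1) :=
  Submodule.subset_span ⟨d, hd, v, rfl⟩

theorem lcs3_eq_bot (φ : V → V → V) (hnilp : IsNilp ℂ φ)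
    (hdim : Module.finrank ℂ V = 3) : lcs ℂ φ 3 = ⊥ := by
  have : FiniteDimensional ℂ V := FiniteDimensional.of_finrank_eq_succ hdim
  by_contra h3
  have h2 : lcs ℂ φ 2 ≠ ⊥ := fun h => h3 (le_bot_iff.mp (h ▸ lcs_succ_le φ 2))
  have h1 : lcs ℂ φ 1 ≠ ⊥ := fun h => h2 (le_bot_iff.mp (h ▸ lcs_succ_le φ 1))
  have h0 : lcs ℂ φ 0 ≠ ⊥ := fun h => h1 (le_bot_iff.mp (h ▸ lcs_succ_le φ 0))
  have s2 := Submodule.finrank_lt_finrank_of_lt (lcs_strict φ hnilp h2)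
  have s1 := Submodule.finrank_lt_finrank_of_lt (lcs_strict φ hnilp h1)
  have s0 := Submodule.finrank_lt_finrank_of_lt (lcs_strict φ hnilp h0)
  have htop : Module.finrank ℂ (lcs ℂ φ 0) = 3 := by
    show Module.finrank ℂ (⊤ : Submodule ℂ V) = 3
    rw [finrank_top]; exact hdim
  have s2' : Module.finrank ℂ (lcs ℂ φ 3) < Module.finrank ℂ (lcs ℂ φ 2) := s2
  have s1' : Module.finrank ℂ (lcs ℂ φ 2) < Module.finrank ℂ (lcs ℂ φ 1) := s1
  have s0' : Module.finrank ℂ (lcs ℂ φ 1) < Module.finrank ℂ (lcs ℂ φ 0) := s0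
  have hpos : 0 < Module.finrank ℂ (lcs ℂ φ 3) := by
    rcases Nat.eq_zero_or_pos (Module.finrank ℂ (lcs ℂ φ 3)) with h | h
    · exact absurd (Submodule.finrank_eq_zero.mp h) h3
    · exact h
  omega

theorem iso_of_table {φ : V → V → V} (hbil : IsBilin ℂ φ)
    {ψ : (Fin 3 → ℂ) → (Fin 3 → ℂ) → (Fin 3 → ℂ)} (hψ : IsBilin ℂ ψ)
    (b : Module.Basis (Fin 3) ℂ V)
    (h : ∀ i j, b.equivFun (φ (b i) (b j)) = ψ (b.equivFun (b i)) (b.equivFun (b j))) :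
    IsIso ℂ φ ψ := by
  obtain ⟨Φ, hΦ⟩ := exists_Phi hbil
  obtain ⟨Ψ, hΨ⟩ := exists_Phi hψ
  set f := b.equivFun with hf
  have hAB : Φ.compr₂ (f : V →ₗ[ℂ] (Fin 3 → ℂ)) =
      Ψ.compl₁₂ (f : V →ₗ[ℂ] (Fin 3 → ℂ)) (f : V →ₗ[ℂ] (Fin 3 → ℂ)) := by
    apply b.ext; intro i
    apply b.ext; intro j
    simp only [LinearMap.compr₂_apply, LinearMap.compl₁₂_apply, LinearEquiv.coe_coe]
    rw [hΦ, hΨ]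
    exact h i j
  refine ⟨f, fun x y => ?_⟩
  have := LinearMap.congr_fun₂ hAB x y
  simp only [LinearMap.compr₂_apply, LinearMap.compl₁₂_apply, LinearEquiv.coe_coe] at this
  rw [hΦ, hΨ] at this
  exact this

end Helpers

section Models

theorem bilin_psi1 : IsBilin ℂ ψ₁ := by
  constructor <;> intro a x y z <;> funext k <;> fin_cases k <;>
    simp [ψ₁, Pi.smul_apply, smul_eq_mul] <;> ring

theorem bilin_psi2 : IsBilin ℂ ψ₂ := by
  constructor <;> intro a x y z <;> funext k <;> fin_cases k <;>
    simp [ψ₂, Pi.smul_apply, smul_eq_mul] <;> ring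

theorem bilin_psi3 : IsBilin ℂ ψ₃ := by
  constructor <;> intro a x y z <;> funext k <;> fin_cases k <;>
    simp [ψ₃, Pi.smul_apply, smul_eq_mul] <;> ring

def PropP {V : Type*} [AddCommGroup V] [Module ℂ V] (φ : V → V → V) : Prop :=
  ∃ a b, φ a (φ b b) ≠ 0

def PropQ {V : Type*} [AddCommGroup V] [Module ℂ V] (φ : V → V → V) : Prop :=
  ∃ u v, (∀ w, φ u w = 0) ∧ (∀ w, φ v w = 0) ∧
    (∀ a : ℂ, u ≠ a • v) ∧ (∀ a : ℂ, v ≠ a • u)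

theorem isIso_symm {V W : Type*} [AddCommGroup V] [Module ℂ V] [AddCommGroup W] [Module ℂ W]
    {φ : V → V → V} {ψ : W → W → W} (h : IsIso ℂ φ ψ) : IsIso ℂ ψ φ := by
  obtain ⟨f, hf⟩ := h
  refine ⟨f.symm, fun x y => ?_⟩
  have := hf (f.symm x) (f.symm y)
  rw [f.apply_symm_apply, f.apply_symm_apply] at this
  rw [← this, f.symm_apply_apply]

theorem isIso_trans {V W U : Type*} [AddCommGroup V] [Module ℂ V] [AddCommGroup W] [Module ℂ W]
    [AddCommGroup U] [Module ℂ U]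
    {φ : V → V → V} {ψ : W → W → W} {χ : U → U → U}
    (h : IsIso ℂ φ ψ) (h' : IsIso ℂ ψ χ) : IsIso ℂ φ χ := by
  obtain ⟨f, hf⟩ := h; obtain ⟨g, hg⟩ := h'
  exact ⟨f.trans g, fun x y => by simp [hf, hg]⟩

theorem propP_of_iso {V W : Type*} [AddCommGroup V] [Module ℂ V] [AddCommGroup W] [Module ℂ W]
    {φ : V → V → V} {ψ : W → W → W} (h : IsIso ℂ φ ψ) (hP : PropP φ) : PropP ψ := by
  obtain ⟨f, hf⟩ := h
  obtain ⟨a, b, hab⟩ := hP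
  refine ⟨f a, f b, ?_⟩
  rw [← hf, ← hf]
  simpa using hab

theorem propQ_of_iso {V W : Type*} [AddCommGroup V] [Module ℂ V] [AddCommGroup W] [Module ℂ W]
    {φ : V → V → V} {ψ : W → W → W} (h : IsIso ℂ φ ψ) (hQ : PropQ φ) : PropQ ψ := by
  obtain ⟨f, hf⟩ := h
  obtain ⟨u, v, hu, hv, huv, hvu⟩ := hQ
  refine ⟨f u, f v, fun w => ?_, fun w => ?_, fun a ha => ?_, fun a ha => ?_⟩
  · have := hf u (f.symm w); rw [hu _, f.apply_symm_apply] at this; simpa using this.symm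
  · have := hf v (f.symm w); rw [hv _, f.apply_symm_apply] at this; simpa using this.symm
  · exact huv a (by apply f.injective; rw [ha, map_smul])
  · exact hvu a (by apply f.injective; rw [ha, map_smul])

theorem propP_psi1 : PropP ψ₁ := by
  refine ⟨![1,0,0], ![1,0,0], fun h => ?_⟩
  have := congrFun h 2
  simp [ψ₁] at this

theorem not_propP_psi2 : ¬ PropP ψ₂ := by
  rintro ⟨a, b, h⟩
  apply h; funext k; fin_cases k <;> simp [ψ₂]

theorem not_propP_psi3 : ¬ PropP ψ₃ := by
  rintro ⟨a, b, h⟩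
  apply h; funext k; fin_cases k <;> simp [ψ₃]

theorem propQ_psi3 : PropQ ψ₃ := by
  refine ⟨![0,1,0], ![0,0,1], fun w => ?_, fun w => ?_, fun a ha => ?_, fun a ha => ?_⟩
  · funext k; fin_cases k <;> simp [ψ₃]
  · funext k; fin_cases k <;> simp [ψ₃]
  · have := congrFun ha 1; simp at this
  · have := congrFun ha 2; simp at this

theorem ann_pair_dep {u v : Fin 3 → ℂ} (i : Fin 3)
    (hu : ∀ k, k ≠ i → u k = 0) (hv : ∀ k, k ≠ i → v k = 0)
    (huv : ∀ a : ℂ, u ≠ a • v) (hvu : ∀ a : ℂ, v ≠ a • u) : False := by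
  by_cases h : u i = 0
  · refine huv 0 ?_
    funext k
    by_cases hk : k = i
    · subst hk; simpa using h
    · simpa using hu k hk
  · refine hvu (v i / u i) ?_
    funext k
    by_cases hk : k = i
    · subst hk; simp [Pi.smul_apply, smul_eq_mul]; field_simp
    · simp [Pi.smul_apply, hv k hk, hu k hk]

theorem not_propQ_psi1 : ¬ PropQ ψ₁ := by
  rintro ⟨u, v, hu, hv, huv, hvu⟩
  have keyu : ∀ k, k ≠ (2 : Fin 3) → u k = 0 := by
    have h := hu ![1,0,0]
    intro k hk
    fin_cases k
    · have := congrFun h 1; simpa [ψ₁] using this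
    · have := congrFun h 2; simpa [ψ₁] using this
    · exact absurd rfl hk
  have keyv : ∀ k, k ≠ (2 : Fin 3) → v k = 0 := by
    have h := hv ![1,0,0]
    intro k hk
    fin_cases k
    · have := congrFun h 1; simpa [ψ₁] using this
    · have := congrFun h 2; simpa [ψ₁] using this
    · exact absurd rfl hk
  exact ann_pair_dep 2 keyu keyv huv hvu

theorem not_propQ_psi2 : ¬ PropQ ψ₂ := by
  rintro ⟨u, v, hu, hv, huv, hvu⟩
  have keyu : ∀ k, k ≠ (1 : Fin 3) → u k = 0 := by
    intro k hk
    fin_cases k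
    · have := congrFun (hu ![1,0,0]) 1; simpa [ψ₂] using this
    · exact absurd rfl hk
    · have := congrFun (hu ![0,0,1]) 1; simpa [ψ₂] using this
  have keyv : ∀ k, k ≠ (1 : Fin 3) → v k = 0 := by
    intro k hk
    fin_cases k
    · have := congrFun (hv ![1,0,0]) 1; simpa [ψ₂] using this
    · exact absurd rfl hk
    · have := congrFun (hv ![0,0,1]) 1; simpa [ψ₂] using this
  exact ann_pair_dep 1 keyu keyv huv hvu

end Models

section Tables
variable {V : Type*} [AddCommGroup V] [Module ℂ V] {φ : V → V → V}

theorem table_iso_psi1 (hbil : IsBilin ℂ φ) (hdim : Module.finrank ℂ V = 3)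
    {x y z : V} (hz0 : z ≠ 0)
    (t00 : φ x x = y) (t01 : φ x y = z) (t10 : φ y x = z)
    (t02 : φ x z = 0) (t20 : φ z x = 0) (t11 : φ y y = 0)
    (t12 : φ y z = 0) (t21 : φ z y = 0) (t22 : φ z z = 0) : IsIso ℂ φ ψ₁ := by
  obtain ⟨Φ, hΦ⟩ := exists_Phi hbil
  have hli : LinearIndependent ℂ ![x, y, z] := by
    rw [Fintype.linearIndependent_iff]
    intro g hg
    rw [Fin.sum_univ_three] at hg
    simp only [Matrix.cons_val_zero, Matrix.cons_val_one, Matrix.head_cons,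
      Matrix.cons_val_two, Matrix.tail_cons] at hg
    have h1 : Φ x (g 0 • x + g 1 • y + g 2 • z) = 0 := by rw [hg, map_zero]
    rw [map_add, map_add, map_smul, map_smul, map_smul, hΦ, hΦ, hΦ, t00, t01, t02,
      smul_zero, add_zero] at h1
    have h2 : Φ x (g 0 • y + g 1 • z) = 0 := by rw [h1, map_zero]
    rw [map_add, map_smul, map_smul, hΦ, hΦ, t01, t02, smul_zero, add_zero] at h2
    have hg0 : g 0 = 0 := by
      rcases smul_eq_zero.mp h2 with h | h
      · exact h
      · exact absurd h hz0
    have hg1 : g 1 = 0 := by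
      rw [hg0, zero_smul, zero_add] at h1
      rcases smul_eq_zero.mp h1 with h | h
      · exact h
      · exact absurd h hz0
    have hg2 : g 2 = 0 := by
      rw [hg0, hg1, zero_smul, zero_smul, zero_add, zero_add] at hg
      rcases smul_eq_zero.mp hg with h | h
      · exact h
      · exact absurd h hz0
    intro i; fin_cases i <;> assumption
  have hcard : Fintype.card (Fin 3) = Module.finrank ℂ V := by simp [hdim]
  let b := basisOfLinearIndependentOfCardEqFinrank hli hcard
  have hb : ⇑b = ![x, y, z] := coe_basisOfLinearIndependentOfCardEqFinrank hli hcard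
  have hb0 : b 0 = x := by rw [hb]; rfl
  have hb1 : b 1 = y := by rw [hb]; rfl
  have hb2 : b 2 = z := by rw [hb]; rfl
  apply iso_of_table hbil bilin_psi1 b
  have e00 : φ (b 0) (b 0) = b 1 := by rw [hb0, hb1]; exact t00
  have e01 : φ (b 0) (b 1) = b 2 := by rw [hb0, hb1, hb2]; exact t01
  have e10 : φ (b 1) (b 0) = b 2 := by rw [hb0, hb1, hb2]; exact t10
  have e02 : φ (b 0) (b 2) = 0 := by rw [hb0, hb2]; exact t02
  have e20 : φ (b 2) (b 0) = 0 := by rw [hb0, hb2]; exact t20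
  have e11 : φ (b 1) (b 1) = 0 := by rw [hb1]; exact t11
  have e12 : φ (b 1) (b 2) = 0 := by rw [hb1, hb2]; exact t12
  have e21 : φ (b 2) (b 1) = 0 := by rw [hb1, hb2]; exact t21
  have e22 : φ (b 2) (b 2) = 0 := by rw [hb2]; exact t22
  intro i j
  fin_cases i <;> fin_cases j
  · show b.equivFun (φ (b 0) (b 0)) = ψ₁ (b.equivFun (b 0)) (b.equivFun (b 0))
    rw [e00]; funext m; fin_cases m <;> simp [Module.Basis.equivFun_self, ψ₁]
  · show b.equivFun (φ (b 0) (b 1)) = ψ₁ (b.equivFun (b 0)) (b.equivFun (b 1))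
    rw [e01]; funext m; fin_cases m <;> simp [Module.Basis.equivFun_self, ψ₁]
  · show b.equivFun (φ (b 0) (b 2)) = ψ₁ (b.equivFun (b 0)) (b.equivFun (b 2))
    rw [e02]; funext m; fin_cases m <;> simp [Module.Basis.equivFun_self, ψ₁]
  · show b.equivFun (φ (b 1) (b 0)) = ψ₁ (b.equivFun (b 1)) (b.equivFun (b 0))
    rw [e10]; funext m; fin_cases m <;> simp [Module.Basis.equivFun_self, ψ₁]
  · show b.equivFun (φ (b 1) (b 1)) = ψ₁ (b.equivFun (b 1)) (b.equivFun (b 1))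
    rw [e11]; funext m; fin_cases m <;> simp [Module.Basis.equivFun_self, ψ₁]
  · show b.equivFun (φ (b 1) (b 2)) = ψ₁ (b.equivFun (b 1)) (b.equivFun (b 2))
    rw [e12]; funext m; fin_cases m <;> simp [Module.Basis.equivFun_self, ψ₁]
  · show b.equivFun (φ (b 2) (b 0)) = ψ₁ (b.equivFun (b 2)) (b.equivFun (b 0))
    rw [e20]; funext m; fin_cases m <;> simp [Module.Basis.equivFun_self, ψ₁]
  · show b.equivFun (φ (b 2) (b 1)) = ψ₁ (b.equivFun (b 2)) (b.equivFun (b 1))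
    rw [e21]; funext m; fin_cases m <;> simp [Module.Basis.equivFun_self, ψ₁]
  · show b.equivFun (φ (b 2) (b 2)) = ψ₁ (b.equivFun (b 2)) (b.equivFun (b 2))
    rw [e22]; funext m; fin_cases m <;> simp [Module.Basis.equivFun_self, ψ₁]

end Tables

section Tables2
variable {V : Type*} [AddCommGroup V] [Module ℂ V] {φ : V → V → V}

theorem table_iso_psi23 (hbil : IsBilin ℂ φ) (hdim : Module.finrank ℂ V = 3)
    {x y w : V} (hli : LinearIndependent ℂ ![x, y, w])
    (t00 : φ x x = y) (t01 : φ x y = 0) (t10 : φ y x = 0)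
    (t02 : φ x w = 0) (t20 : φ w x = 0) (t11 : φ y y = 0)
    (t12 : φ y w = 0) (t21 : φ w y = 0) {c : Prop} [Decidable c]
    (t22 : φ w w = if c then y else 0) :
    (c → IsIso ℂ φ ψ₂) ∧ (¬ c → IsIso ℂ φ ψ₃) := by
  have hcard : Fintype.card (Fin 3) = Module.finrank ℂ V := by simp [hdim]
  let b := basisOfLinearIndependentOfCardEqFinrank hli hcard
  have hb : ⇑b = ![x, y, w] := coe_basisOfLinearIndependentOfCardEqFinrank hli hcard
  have hb0 : b 0 = x := by rw [hb]; rfl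
  have hb1 : b 1 = y := by rw [hb]; rfl
  have hb2 : b 2 = w := by rw [hb]; rfl
  have e00 : φ (b 0) (b 0) = b 1 := by rw [hb0, hb1]; exact t00
  have e01 : φ (b 0) (b 1) = 0 := by rw [hb0, hb1]; exact t01
  have e10 : φ (b 1) (b 0) = 0 := by rw [hb0, hb1]; exact t10
  have e02 : φ (b 0) (b 2) = 0 := by rw [hb0, hb2]; exact t02
  have e20 : φ (b 2) (b 0) = 0 := by rw [hb0, hb2]; exact t20
  have e11 : φ (b 1) (b 1) = 0 := by rw [hb1]; exact t11
  have e12 : φ (b 1) (b 2) = 0 := by rw [hb1, hb2]; exact t12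
  have e21 : φ (b 2) (b 1) = 0 := by rw [hb1, hb2]; exact t21
  constructor
  · intro hc
    have e22 : φ (b 2) (b 2) = b 1 := by rw [hb1, hb2, t22, if_pos hc]
    apply iso_of_table hbil bilin_psi2 b
    intro i j
    fin_cases i <;> fin_cases j
    · show b.equivFun (φ (b 0) (b 0)) = ψ₂ (b.equivFun (b 0)) (b.equivFun (b 0))
      rw [e00]; funext m; fin_cases m <;> simp [Module.Basis.equivFun_self, ψ₂]
    · show b.equivFun (φ (b 0) (b 1)) = ψ₂ (b.equivFun (b 0)) (b.equivFun (b 1))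
      rw [e01]; funext m; fin_cases m <;> simp [Module.Basis.equivFun_self, ψ₂]
    · show b.equivFun (φ (b 0) (b 2)) = ψ₂ (b.equivFun (b 0)) (b.equivFun (b 2))
      rw [e02]; funext m; fin_cases m <;> simp [Module.Basis.equivFun_self, ψ₂]
    · show b.equivFun (φ (b 1) (b 0)) = ψ₂ (b.equivFun (b 1)) (b.equivFun (b 0))
      rw [e10]; funext m; fin_cases m <;> simp [Module.Basis.equivFun_self, ψ₂]
    · show b.equivFun (φ (b 1) (b 1)) = ψ₂ (b.equivFun (b 1)) (b.equivFun (b 1))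
      rw [e11]; funext m; fin_cases m <;> simp [Module.Basis.equivFun_self, ψ₂]
    · show b.equivFun (φ (b 1) (b 2)) = ψ₂ (b.equivFun (b 1)) (b.equivFun (b 2))
      rw [e12]; funext m; fin_cases m <;> simp [Module.Basis.equivFun_self, ψ₂]
    · show b.equivFun (φ (b 2) (b 0)) = ψ₂ (b.equivFun (b 2)) (b.equivFun (b 0))
      rw [e20]; funext m; fin_cases m <;> simp [Module.Basis.equivFun_self, ψ₂]
    · show b.equivFun (φ (b 2) (b 1)) = ψ₂ (b.equivFun (b 2)) (b.equivFun (b 1))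
      rw [e21]; funext m; fin_cases m <;> simp [Module.Basis.equivFun_self, ψ₂]
    · show b.equivFun (φ (b 2) (b 2)) = ψ₂ (b.equivFun (b 2)) (b.equivFun (b 2))
      rw [e22]; funext m; fin_cases m <;> simp [Module.Basis.equivFun_self, ψ₂]
  · intro hc
    have e22 : φ (b 2) (b 2) = 0 := by rw [hb2, t22, if_neg hc]
    apply iso_of_table hbil bilin_psi3 b
    intro i j
    fin_cases i <;> fin_cases j
    · show b.equivFun (φ (b 0) (b 0)) = ψ₃ (b.equivFun (b 0)) (b.equivFun (b 0))
      rw [e00]; funext m; fin_cases m <;> simp [Module.Basis.equivFun_self, ψ₃]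
    · show b.equivFun (φ (b 0) (b 1)) = ψ₃ (b.equivFun (b 0)) (b.equivFun (b 1))
      rw [e01]; funext m; fin_cases m <;> simp [Module.Basis.equivFun_self, ψ₃]
    · show b.equivFun (φ (b 0) (b 2)) = ψ₃ (b.equivFun (b 0)) (b.equivFun (b 2))
      rw [e02]; funext m; fin_cases m <;> simp [Module.Basis.equivFun_self, ψ₃]
    · show b.equivFun (φ (b 1) (b 0)) = ψ₃ (b.equivFun (b 1)) (b.equivFun (b 0))
      rw [e10]; funext m; fin_cases m <;> simp [Module.Basis.equivFun_self, ψ₃]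
    · show b.equivFun (φ (b 1) (b 1)) = ψ₃ (b.equivFun (b 1)) (b.equivFun (b 1))
      rw [e11]; funext m; fin_cases m <;> simp [Module.Basis.equivFun_self, ψ₃]
    · show b.equivFun (φ (b 1) (b 2)) = ψ₃ (b.equivFun (b 1)) (b.equivFun (b 2))
      rw [e12]; funext m; fin_cases m <;> simp [Module.Basis.equivFun_self, ψ₃]
    · show b.equivFun (φ (b 2) (b 0)) = ψ₃ (b.equivFun (b 2)) (b.equivFun (b 0))
      rw [e20]; funext m; fin_cases m <;> simp [Module.Basis.equivFun_self, ψ₃]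
    · show b.equivFun (φ (b 2) (b 1)) = ψ₃ (b.equivFun (b 2)) (b.equivFun (b 1))
      rw [e21]; funext m; fin_cases m <;> simp [Module.Basis.equivFun_self, ψ₃]
    · show b.equivFun (φ (b 2) (b 2)) = ψ₃ (b.equivFun (b 2)) (b.equivFun (b 2))
      rw [e22]; funext m; fin_cases m <;> simp [Module.Basis.equivFun_self, ψ₃]

end Tables2

section MainProof
variable {V : Type*} [AddCommGroup V] [Module ℂ V]

theorem decomp_of_notmem (hdim : Module.finrank ℂ V = 3)
    {x : V} {p : Submodule ℂ V} (hx : x ∉ p) (hp : Module.finrank ℂ p = 2) :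
    ∀ a : V, ∃ (c : ℂ) (d : V), d ∈ p ∧ a = c • x + d := by
  have hfd : FiniteDimensional ℂ V := FiniteDimensional.of_finrank_eq_succ hdim
  have hxne : x ≠ 0 := fun h => hx (h ▸ p.zero_mem)
  have hinf : Submodule.span ℂ {x} ⊓ p = ⊥ := by
    rw [eq_bot_iff]
    rintro v hv
    obtain ⟨hv1, hv2⟩ := Submodule.mem_inf.mp hv
    obtain ⟨c, rfl⟩ := Submodule.mem_span_singleton.mp hv1
    rcases eq_or_ne c 0 with rfl | hc
    · simp
    · exact absurd (by simpa [smul_smul, inv_mul_cancel₀ hc] using p.smul_mem c⁻¹ hv2) hx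
  have hsup : Submodule.span ℂ {x} ⊔ p = ⊤ := by
    apply Submodule.eq_top_of_finrank_eq
    have h := Submodule.finrank_sup_add_finrank_inf_eq (Submodule.span ℂ {x}) p
    rw [hinf, finrank_bot, finrank_span_singleton hxne, hp] at h
    rw [hdim]
    omega
  intro a
  have ha : a ∈ Submodule.span ℂ {x} ⊔ p := hsup ▸ Submodule.mem_top
  rw [Submodule.mem_sup] at ha
  obtain ⟨q, hq, d, hd, hqd⟩ := ha
  obtain ⟨c, rfl⟩ := Submodule.mem_span_singleton.mp hq
  exact ⟨c, d, hd, hqd.symm⟩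

theorem existence_part {φ : V → V → V}
    (hbil : IsBilin ℂ φ) (hcomm : IsComm φ) (hjord : JordanId φ)
    (hnilp : IsNilp ℂ φ) (hdim : Module.finrank ℂ V = 3)
    (hnonab : ∃ x y : V, φ x y ≠ 0) :
    ∃ i : Fin 3, IsIso ℂ φ (model i) := by
  obtain ⟨Φ, hΦ⟩ := exists_Phi hbil
  have hfd : FiniteDimensional ℂ V := FiniteDimensional.of_finrank_eq_succ hdim
  have h3bot := lcs3_eq_bot φ hnilp hdim
  have hT4 : ∀ a b c d : V, φ (φ (φ a b) c) d = 0 := by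
    intro a b c d
    have h3 : φ (φ (φ a b) c) d ∈ lcs ℂ φ 3 :=
      mem_lcs_succ φ (mem_lcs_succ φ (prod_mem_lcs1 φ a b) c) d
    rw [h3bot] at h3
    simpa using h3
  have htop3 : Module.finrank ℂ (lcs ℂ φ 0 : Submodule ℂ V) = 3 := by
    show Module.finrank ℂ (⊤ : Submodule ℂ V) = 3
    rw [finrank_top]; exact hdim
  by_cases hA : ∃ x : V, φ x (φ x x) ≠ 0
  · -- ψ₁ case
    obtain ⟨x, hx⟩ := hA
    refine ⟨0, ?_⟩
    show IsIso ℂ φ ψ₁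
    refine table_iso_psi1 hbil hdim (x := x) (y := φ x x) (z := φ x (φ x x)) hx rfl rfl
      (hcomm _ _) ?_ ?_ ?_ ?_ ?_ ?_
    · -- φ x (φ x (φ x x)) = 0
      rw [hcomm x (φ x (φ x x)), hcomm x (φ x x)]
      exact hT4 x x x x
    · rw [hcomm x (φ x x)]
      exact hT4 x x x x
    · rw [hjord x x, hcomm x (φ (φ x x) x)]
      exact hT4 x x x x
    · rw [hcomm (φ x x) (φ x (φ x x)), hcomm x (φ x x)]
      exact hT4 x x x (φ x x)
    · rw [hcomm x (φ x x)]
      exact hT4 x x x (φ x x)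
    · rw [hcomm x (φ x x)]
      exact hT4 x x x (φ (φ x x) x)
  · -- cases ψ₂/ψ₃
    push_neg at hA
    have hv0 : ∀ v : V, φ v 0 = 0 := fun v => by rw [← hΦ]; exact map_zero _
    have h0v : ∀ v : V, φ 0 v = 0 := fun v => (hcomm 0 v).trans (hv0 v)
    have hstar : ∀ t : V, φ (φ t t) (φ t t) = 0 := by
      intro t
      rw [hjord t t, hcomm (φ t t) t, hA t, hv0]
    -- lcs 2 = ⊥
    have h2bot : lcs ℂ φ 2 = ⊥ := by
      by_contra h2ne
      have h1ne : lcs ℂ φ 1 ≠ ⊥ := fun h => h2ne (le_bot_iff.mp (h ▸ lcs_succ_le φ 1))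
      have s1 := Submodule.finrank_lt_finrank_of_lt (lcs_strict φ hnilp h1ne)
      have s0 := Submodule.finrank_lt_finrank_of_lt (lcs_strict φ hnilp (m := 0) (fun h =>
        h1ne (le_bot_iff.mp (h ▸ lcs_succ_le φ 0))))
      have s0' : Module.finrank ℂ (lcs ℂ φ 1 : Submodule ℂ V) <
          Module.finrank ℂ (lcs ℂ φ 0 : Submodule ℂ V) := s0
      have s1' : Module.finrank ℂ (lcs ℂ φ 2 : Submodule ℂ V) <
          Module.finrank ℂ (lcs ℂ φ 1 : Submodule ℂ V) := s1
      have r2pos : 0 < Module.finrank ℂ (lcs ℂ φ 2 : Submodule ℂ V) := by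
        rcases Nat.eq_zero_or_pos (Module.finrank ℂ (lcs ℂ φ 2 : Submodule ℂ V)) with h | h
        · exact absurd (Submodule.finrank_eq_zero.mp h) h2ne
        · exact h
      have r1 : Module.finrank ℂ (lcs ℂ φ 1 : Submodule ℂ V) = 2 := by omega
      obtain ⟨x, hx⟩ : ∃ x : V, x ∉ lcs ℂ φ 1 := by
        by_contra h
        push_neg at h
        have : lcs ℂ φ 1 = ⊤ := Submodule.eq_top_iff'.mpr h
        rw [this, finrank_top, hdim] at r1
        omega
      have hdec := decomp_of_notmem hdim hx r1
      have hM : ∀ a b : V, φ a b ∈ Submodule.span ℂ {φ x x} ⊔ lcs ℂ φ 2 := by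
        intro a b
        obtain ⟨ca, da, hda, rfl⟩ := hdec a
        obtain ⟨cb, db, hdb, rfl⟩ := hdec b
        have hexp : φ (ca • x + da) (cb • x + db) =
            (ca * cb) • φ x x + ((ca • φ x db + cb • φ da x) + φ da db) := by
          simp only [← hΦ, map_add, map_smul, LinearMap.add_apply, LinearMap.smul_apply,
            smul_add, smul_smul]
          module
        rw [hexp]
        refine Submodule.add_mem _ ?_ (Submodule.add_mem _ (Submodule.add_mem _ ?_ ?_) ?_)
        · exact Submodule.mem_sup_left (Submodule.smul_mem _ _ (Submodule.subset_span rfl))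
        · refine Submodule.mem_sup_right (Submodule.smul_mem _ _ ?_)
          rw [hcomm x db]
          exact mem_lcs_succ φ hdb x
        · exact Submodule.mem_sup_right (Submodule.smul_mem _ _ (mem_lcs_succ φ hda x))
        · exact Submodule.mem_sup_right (mem_lcs_succ φ hda db)
      have hlcs1M : lcs ℂ φ 1 ≤ Submodule.span ℂ {φ x x} ⊔ lcs ℂ φ 2 := by
        apply Submodule.span_le.mpr
        rintro z ⟨a, -, b, rfl⟩
        exact hM a b
      have hkey : ∀ v : V, φ (φ x x) v = 0 := by
        have haux : ∀ d ∈ lcs ℂ φ 1, φ (φ x x) d = 0 := by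
          intro d hd
          obtain ⟨q, hq, m, hm, hqm⟩ := Submodule.mem_sup.mp (hlcs1M hd)
          obtain ⟨γ, rfl⟩ := Submodule.mem_span_singleton.mp hq
          have h1 : φ (φ x x) m = 0 := by
            rw [hcomm (φ x x) m]
            have := mem_lcs_succ φ hm (φ x x)
            rw [h3bot] at this
            simpa using this
          rw [← hqm, ← hΦ, map_add, map_smul, hΦ, hΦ, hstar x, h1, smul_zero, add_zero]
        intro v
        obtain ⟨c, d, hd, rfl⟩ := hdec v
        rw [← hΦ, map_add, map_smul, hΦ, hΦ, haux d hd,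
          show φ (φ x x) x = 0 from (hcomm (φ x x) x).trans (hA x), smul_zero, add_zero]
      have hgen0 : ∀ d ∈ lcs ℂ φ 1, ∀ v : V, φ d v = 0 := by
        intro d hd v
        obtain ⟨q, hq, m, hm, hqm⟩ := Submodule.mem_sup.mp (hlcs1M hd)
        obtain ⟨γ, rfl⟩ := Submodule.mem_span_singleton.mp hq
        have h1 : φ m v = 0 := by
          have := mem_lcs_succ φ hm v
          rw [h3bot] at this
          simpa using this
        rw [← hqm, ← hΦ, map_add, LinearMap.add_apply, map_smul, LinearMap.smul_apply,
          hΦ, hΦ, hkey v, h1, smul_zero, add_zero]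
      apply h2ne
      rw [eq_bot_iff]
      apply Submodule.span_le.mpr
      rintro z ⟨d, hd, v, rfl⟩
      simpa using hgen0 d hd v
    -- now the annihilation facts
    have hann : ∀ d ∈ lcs ℂ φ 1, ∀ v : V, φ d v = 0 := by
      intro d hd v
      have := mem_lcs_succ φ hd v
      rw [h2bot] at this
      simpa using this
    have h1nebot : lcs ℂ φ 1 ≠ ⊥ := by
      obtain ⟨u, v, huv⟩ := hnonab
      intro h
      have := prod_mem_lcs1 φ u v
      rw [h] at this
      exact huv (by simpa using this)
    have h1netop : lcs ℂ φ 1 ≠ ⊤ := by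
      intro h
      have h12 : lcs ℂ φ 1 ≤ lcs ℂ φ 2 := by
        show Submodule.span ℂ {z | ∃ x ∈ lcs ℂ φ 0, ∃ y, z = φ x y} ≤ lcs ℂ φ 2
        apply Submodule.span_mono
        rintro z ⟨a, -, y, rfl⟩
        exact ⟨a, by rw [h]; trivial, y, rfl⟩
      rw [h2bot] at h12
      exact h1nebot (le_bot_iff.mp h12)
    have r1 : Module.finrank ℂ (lcs ℂ φ 1 : Submodule ℂ V) = 1 := by
      have hlt : Module.finrank ℂ (lcs ℂ φ 1 : Submodule ℂ V) < 3 := by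
        have := Submodule.finrank_lt_finrank_of_lt (t := (⊤ : Submodule ℂ V))
          (lt_top_iff_ne_top.mpr h1netop)
        rwa [finrank_top, hdim] at this
      have hpos : 0 < Module.finrank ℂ (lcs ℂ φ 1 : Submodule ℂ V) := by
        rcases Nat.eq_zero_or_pos (Module.finrank ℂ (lcs ℂ φ 1 : Submodule ℂ V)) with h | h
        · exact absurd (Submodule.finrank_eq_zero.mp h) h1nebot
        · exact h
      by_contra hne
      have r1' : Module.finrank ℂ (lcs ℂ φ 1 : Submodule ℂ V) = 2 := by omega
      obtain ⟨x, hx⟩ : ∃ x : V, x ∉ lcs ℂ φ 1 := by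
        by_contra h
        push_neg at h
        exact h1netop (Submodule.eq_top_iff'.mpr h)
      have hdec := decomp_of_notmem hdim hx r1'
      have hle : lcs ℂ φ 1 ≤ Submodule.span ℂ {φ x x} := by
        apply Submodule.span_le.mpr
        rintro z ⟨a, -, b, rfl⟩
        obtain ⟨ca, da, hda, rfl⟩ := hdec a
        obtain ⟨cb, db, hdb, rfl⟩ := hdec b
        have hexp : φ (ca • x + da) (cb • x + db) =
            (ca * cb) • φ x x + ((ca • φ x db + cb • φ da x) + φ da db) := by
          simp only [← hΦ, map_add, map_smul, LinearMap.add_apply, LinearMap.smul_apply,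
            smul_add, smul_smul]
          module
        rw [hexp, show φ x db = 0 from (hcomm x db).trans (hann db hdb x),
          hann da hda x, hann da hda db, smul_zero, smul_zero, add_zero, add_zero, add_zero]
        exact Submodule.smul_mem _ _ (Submodule.subset_span rfl)
      have : Module.finrank ℂ (lcs ℂ φ 1 : Submodule ℂ V) ≤ 1 := by
        rcases eq_or_ne (φ x x) 0 with h | h
        · rw [h, Submodule.span_zero_singleton] at hle
          rw [le_bot_iff.mp hle] at h1nebot
          exact absurd rfl h1nebot
        · have := Submodule.finrank_mono hle
          rwa [finrank_span_singleton h] at this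
      omega
    -- a nonzero square
    have hsq : ∃ t : V, φ t t ≠ 0 := by
      by_contra h
      push_neg at h
      obtain ⟨u, v, huv⟩ := hnonab
      apply huv
      have hexp : φ (u + v) (u + v) = φ u u + φ u v + (φ v u + φ v v) := by
        rw [← hΦ, map_add Φ u v, LinearMap.add_apply, map_add, map_add, hΦ, hΦ, hΦ, hΦ]
      rw [h u, h v, h (u + v), hcomm v u, zero_add, add_zero] at hexp
      have h2 : (2 : ℂ) • φ u v = 0 := by rw [two_smul]; exact hexp.symm
      rcases smul_eq_zero.mp h2 with h' | h'
      · norm_num at h'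
      · exact h'
    obtain ⟨t, ht⟩ := hsq
    have hemem : φ t t ∈ lcs ℂ φ 1 := prod_mem_lcs1 φ t t
    have hspan : Submodule.span ℂ {φ t t} = lcs ℂ φ 1 := by
      apply Submodule.eq_of_le_of_finrank_eq
      · exact Submodule.span_le.mpr (Set.singleton_subset_iff.mpr hemem)
      · rw [finrank_span_singleton ht, r1]
    have hprod : ∀ a b : V, ∃ c : ℂ, φ a b = c • φ t t := by
      intro a b
      have := prod_mem_lcs1 φ a b
      rw [← hspan] at this
      obtain ⟨c, hc⟩ := Submodule.mem_span_singleton.mp this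
      exact ⟨c, hc.symm⟩
    have he0 : ∀ v : V, φ (φ t t) v = 0 := fun v => hann _ hemem v
    have h0e : ∀ v : V, φ v (φ t t) = 0 := fun v => (hcomm _ _).trans (he0 v)
    choose B hB using hprod
    have hBuniq : ∀ a b : V, ∀ c : ℂ, φ a b = c • φ t t → B a b = c := by
      intro a b c h
      have : B a b • φ t t = c • φ t t := by rw [← hB a b, h]
      exact smul_left_injective ℂ ht this
    have hBtt : B t t = 1 := hBuniq t t 1 (by rw [one_smul])
    have hBe : ∀ a : V, B a (φ t t) = 0 := fun a => hBuniq _ _ 0 (by rw [zero_smul, h0e])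
    have hBsub : ∀ a u v : V, B a (u - v) = B a u - B a v := by
      intro a u v
      apply hBuniq
      rw [sub_smul, ← hB, ← hB, ← hΦ, map_sub, hΦ, hΦ]
    have hBsmul : ∀ (c : ℂ) (a u : V), B a (c • u) = c * B a u := by
      intro c a u
      apply hBuniq
      rw [mul_smul, ← hB, ← hΦ, map_smul, hΦ]
    have hBsmul' : ∀ (c : ℂ) (a u : V), B (c • a) u = c * B a u := by
      intro c a u
      apply hBuniq
      rw [mul_smul, ← hB, ← hΦ, map_smul, LinearMap.smul_apply, hΦ]
    -- pick w outside span {t, φ t t}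
    have hsupne : Submodule.span ℂ {t} ⊔ Submodule.span ℂ {φ t t} ≠ ⊤ := by
      intro h
      have h1 := Submodule.finrank_sup_add_finrank_inf_eq (Submodule.span ℂ {t})
        (Submodule.span ℂ {φ t t})
      have htne : t ≠ 0 := by
        intro h'
        exact ht (by rw [h', h0v])
      rw [h, finrank_top, hdim, finrank_span_singleton htne, finrank_span_singleton ht] at h1
      omega
    obtain ⟨w, hw⟩ : ∃ w : V, w ∉ Submodule.span ℂ {t} ⊔ Submodule.span ℂ {φ t t} := by
      by_contra h
      push_neg at h
      exact hsupne (Submodule.eq_top_iff'.mpr h)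
    -- projected vector
    have hw' : w - B t w • t ∉ Submodule.span ℂ {t} ⊔ Submodule.span ℂ {φ t t} := by
      intro h
      apply hw
      have : w = (w - B t w • t) + B t w • t := by abel
      rw [this]
      exact Submodule.add_mem _ h
        (Submodule.mem_sup_left (Submodule.smul_mem _ _ (Submodule.subset_span rfl)))
    have hBtw' : B t (w - B t w • t) = 0 := by
      rw [hBsub, hBsmul, hBtt, mul_one, sub_self]
    -- independence helper
    have hli : ∀ w₀ : V, w₀ ∉ Submodule.span ℂ {t} ⊔ Submodule.span ℂ {φ t t} →
        LinearIndependent ℂ ![t, φ t t, w₀] := by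
      intro w₀ hw₀
      rw [Fintype.linearIndependent_iff]
      intro g hg
      rw [Fin.sum_univ_three] at hg
      simp only [Matrix.cons_val_zero, Matrix.cons_val_one, Matrix.head_cons,
        Matrix.cons_val_two, Matrix.tail_cons] at hg
      have hg2 : g 2 = 0 := by
        by_contra hg2
        apply hw₀
        have : w₀ = (g 2)⁻¹ • (-(g 0 • t + g 1 • φ t t)) := by
          have h' : g 2 • w₀ = -(g 0 • t + g 1 • φ t t) := by
            rw [eq_neg_iff_add_eq_zero, add_comm]
            exact hg
          rw [← h', smul_smul, inv_mul_cancel₀ hg2, one_smul]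
        rw [this]
        refine Submodule.smul_mem _ _ (Submodule.neg_mem _ (Submodule.add_mem _ ?_ ?_))
        · exact Submodule.mem_sup_left (Submodule.smul_mem _ _ (Submodule.subset_span rfl))
        · exact Submodule.mem_sup_right (Submodule.smul_mem _ _ (Submodule.subset_span rfl))
      rw [hg2, zero_smul, add_zero] at hg
      have hg0 : g 0 = 0 := by
        have h1 : Φ t (g 0 • t + g 1 • φ t t) = 0 := by rw [hg, map_zero]
        rw [map_add, map_smul, map_smul, hΦ, hΦ, h0e, smul_zero, add_zero] at h1
        rcases smul_eq_zero.mp h1 with h | h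
        · exact h
        · exact absurd h ht
      rw [hg0, zero_smul, zero_add] at hg
      have hg1 : g 1 = 0 := by
        rcases smul_eq_zero.mp hg with h | h
        · exact h
        · exact absurd h ht
      intro i; fin_cases i <;> assumption
    by_cases hc : B (w - B t w • t) (w - B t w • t) = 0
    · -- ψ₃
      refine ⟨2, ?_⟩
      show IsIso ℂ φ ψ₃
      refine (table_iso_psi23 hbil hdim (hli _ hw') rfl (h0e t) (he0 t) ?_ ?_ (he0 _) (he0 _)
        ((hcomm _ _).trans (he0 _)) (c := False) ?_).2 (fun h => h)
      · rw [hB t (w - B t w • t), hBtw', zero_smul]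
      · rw [hcomm, hB t (w - B t w • t), hBtw', zero_smul]
      · rw [if_neg (fun h => h)]
        rw [hB _ _, hc, zero_smul]
    · -- ψ₂
      refine ⟨1, ?_⟩
      show IsIso ℂ φ ψ₂
      obtain ⟨s, hs⟩ := IsAlgClosed.exists_pow_nat_eq (B (w - B t w • t) (w - B t w • t))
        (n := 2) (by omega)
      have hsne : s ≠ 0 := by
        intro h
        rw [h] at hs
        exact hc (by rw [← hs]; ring)
      have hwmem : s⁻¹ • (w - B t w • t) ∉ Submodule.span ℂ {t} ⊔ Submodule.span ℂ {φ t t} := by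
        intro h
        apply hw'
        have : w - B t w • t = s • s⁻¹ • (w - B t w • t) := by
          rw [smul_smul, mul_inv_cancel₀ hsne, one_smul]
        rw [this]
        exact Submodule.smul_mem _ _ h
      refine (table_iso_psi23 hbil hdim (hli _ hwmem) rfl (h0e t) (he0 t) ?_ ?_ (he0 _) (he0 _)
        ((hcomm _ _).trans (he0 _)) (c := True) ?_).1 trivial
      · rw [hB t _, hBsmul, hBtw', mul_zero, zero_smul]
      · rw [hcomm, hB t _, hBsmul, hBtw', mul_zero, zero_smul]
      · rw [if_pos trivial, hB _ _, hBsmul', hBsmul, ← hs]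
        have hone : s⁻¹ * (s⁻¹ * s ^ 2) = 1 := by
          field_simp
        rw [hone, one_smul]

end MainProof

/-- every non-Abelian three-dimensional nilpotent complex Jordan algebra
is isomorphic to exactly one of φ₁, φ₂, φ₃. -/
theorem dim_three_nilpotent_jordan_classification
    {V : Type*} [AddCommGroup V] [Module ℂ V] (φ : V → V → V)
    (hbil : IsBilin ℂ φ) (hcomm : IsComm φ) (hjord : JordanId φ)
    (hnilp : IsNilp ℂ φ) (hdim : Module.finrank ℂ V = 3)
    (hnonab : ∃ x y : V, φ x y ≠ 0) :
    ∃! i : Fin 3, IsIso ℂ φ (model i) := by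
  obtain ⟨i, hi⟩ := existence_part hbil hcomm hjord hnilp hdim hnonab
  refine ⟨i, hi, ?_⟩
  intro j hj
  have hij : IsIso ℂ (model j) (model i) := isIso_trans (isIso_symm hj) hi
  have hji : IsIso ℂ (model i) (model j) := isIso_trans (isIso_symm hi) hj
  fin_cases i <;> fin_cases j
  · rfl
  · exact absurd (propP_of_iso hji propP_psi1) not_propP_psi2
  · exact absurd (propP_of_iso hji propP_psi1) not_propP_psi3
  · exact absurd (propP_of_iso hij propP_psi1) not_propP_psi2
  · rfl
  · exact absurd (propQ_of_iso hij propQ_psi3) not_propQ_psi2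
  · exact absurd (propP_of_iso hij propP_psi1) not_propP_psi3
  · exact absurd (propQ_of_iso hji propQ_psi3) not_propQ_psi2
  · rfl
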